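/- Let q : ℝ^{2d} → ℂ be a quadratic form with Hamilton map F such that Re q(X) ≥ 0 for all X and with trivial singular space S = {0}, and extend q to the holomorphic quadratic polynomial on ℂ^{2d}. Fix T > 0, let G(X) = ∫₀^T (1 − t/T)·Re q(exp(2t·Im F)X) dt, and let H_G = 2F_G denote twice the Hamilton map of the real quadratic form G. Then there exists δ₀ > 0 such that for every 0 < δ ≤ δ₀ and every X ∈ ℝ^{2d} \ {0}: Re q(X + iδ·H_G X) > 0. -/

import Mathlib

open Matrix

noncomputable section

/-- The standard symplectic matrix `J = [[0, -I], [I, 0]]` on `R^d ⊕ R^d`. -/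
def Jmat (d : ℕ) (R : Type*) [Ring R] :
    Matrix (Fin d ⊕ Fin d) (Fin d ⊕ Fin d) R :=
  Matrix.fromBlocks 0 (-1) 1 0

/-- The complex quadratic form `X ↦ ⟨X, A X⟩` evaluated on a real vector `X ∈ ℝ^{2d}`. -/
def Qc {d : ℕ} (A : Matrix (Fin d ⊕ Fin d) (Fin d ⊕ Fin d) ℂ)
    (X : Fin d ⊕ Fin d → ℝ) : ℂ :=
  (fun i => (X i : ℂ)) ⬝ᵥ A *ᵥ (fun i => (X i : ℂ))

namespace S4

set_option linter.unusedSectionVars false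

variable {m : Type*} [Fintype m] [DecidableEq m]

/-! ### Algebraic lemmas -/

lemma cdot_eq (B : Matrix m m ℂ) (x y : m → ℝ) :
    ((fun i => (x i : ℂ)) ⬝ᵥ B *ᵥ (fun i => (y i : ℂ)))
      = ((x ⬝ᵥ B.map Complex.re *ᵥ y : ℝ) : ℂ)
        + ((x ⬝ᵥ B.map Complex.im *ᵥ y : ℝ) : ℂ) * Complex.I := by
  apply Complex.ext <;>
    simp [dotProduct, mulVec, Matrix.map_apply, Complex.re_sum, Complex.im_sum,
      Finset.mul_sum, Finset.sum_mul, mul_comm, mul_left_comm, mul_assoc]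

lemma symm_dot (B : Matrix m m ℝ) (hB : B.IsSymm) (x y : m → ℝ) :
    x ⬝ᵥ B *ᵥ y = y ⬝ᵥ B *ᵥ x := by
  calc x ⬝ᵥ B *ᵥ y = ∑ i, ∑ j, x i * (B i j * y j) := by
        simp [dotProduct, mulVec, Finset.mul_sum]
    _ = ∑ j, ∑ i, y j * (B j i * x i) := by
        rw [Finset.sum_comm]
        refine Finset.sum_congr rfl fun j _ => Finset.sum_congr rfl fun i _ => ?_
        rw [hB.apply]; ring
    _ = y ⬝ᵥ B *ᵥ x := by simp [dotProduct, mulVec, Finset.mul_sum]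

/-- Real part of the holomorphically extended quadratic form at `x + iδ y`. -/
lemma re_expand (B : Matrix m m ℂ) (hB : B.IsSymm) (δ : ℝ) (x y : m → ℝ) :
    ((fun i => (x i : ℂ) + Complex.I * (δ:ℂ) * (y i : ℂ)) ⬝ᵥ B *ᵥ
      (fun i => (x i : ℂ) + Complex.I * (δ:ℂ) * (y i : ℂ))).re
      = x ⬝ᵥ B.map Complex.re *ᵥ x - 2 * δ * (x ⬝ᵥ B.map Complex.im *ᵥ y)
        - δ^2 * (y ⬝ᵥ B.map Complex.re *ᵥ y) := by
  have hBr : (B.map Complex.re).IsSymm := hB.map _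
  have hBi : (B.map Complex.im).IsSymm := hB.map _
  have key : (fun i => (x i : ℂ) + Complex.I * (δ:ℂ) * (y i : ℂ))
      = (fun i => (x i : ℂ)) + (Complex.I * (δ:ℂ)) • (fun i => (y i : ℂ)) := by
    funext i; simp [mul_comm, mul_assoc]
  rw [key]
  rw [add_dotProduct, Matrix.mulVec_add, Matrix.mulVec_smul, dotProduct_add,
    dotProduct_add, smul_dotProduct, smul_dotProduct,
    dotProduct_smul, dotProduct_smul]
  rw [cdot_eq B x x, cdot_eq B x y, cdot_eq B y x, cdot_eq B y y]
  rw [symm_dot _ hBr x y, symm_dot _ hBi x y] at *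
  simp only [smul_eq_mul]
  simp [Complex.add_re, Complex.mul_re, Complex.mul_im, Complex.I_re, Complex.I_im,
    Complex.ofReal_re, Complex.ofReal_im]
  ring

lemma map_ofReal_mul_re (M : Matrix m m ℝ) (N : Matrix m m ℂ) :
    ((M.map (fun r => (r : ℂ))) * N).map Complex.re = M * N.map Complex.re := by
  ext i j
  simp [Matrix.mul_apply, Matrix.map_apply, Complex.re_sum]

lemma map_ofReal_mul_im (M : Matrix m m ℝ) (N : Matrix m m ℂ) :
    ((M.map (fun r => (r : ℂ))) * N).map Complex.im = M * N.map Complex.im := by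
  ext i j
  simp [Matrix.mul_apply, Matrix.map_apply, Complex.im_sum]

lemma Jc_eq (d : ℕ) : Jmat d ℂ = (Jmat d ℝ).map (fun r => (r : ℂ)) := by
  ext i j
  cases i <;> cases j <;>
    simp [Jmat, Matrix.fromBlocks, Matrix.map_apply, Matrix.one_apply, apply_ite]

lemma Jt (d : ℕ) : (Jmat d ℝ)ᵀ = -(Jmat d ℝ) := by
  ext i j
  cases i <;> cases j <;>
    simp [Jmat, Matrix.fromBlocks, Matrix.one_apply, Matrix.transpose_apply, eq_comm]

lemma quad_conj (M B : Matrix m m ℝ) (x : m → ℝ) :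
    x ⬝ᵥ (Mᵀ * B * M) *ᵥ x = (M *ᵥ x) ⬝ᵥ B *ᵥ (M *ᵥ x) := by
  rw [show Mᵀ * B * M = Mᵀ * (B * M) by rw [Matrix.mul_assoc], ← Matrix.mulVec_mulVec,
    Matrix.dotProduct_mulVec x Mᵀ, Matrix.vecMul_transpose, ← Matrix.mulVec_mulVec]

lemma dot_transpose_mulVec (M : Matrix m m ℝ) (x y : m → ℝ) :
    x ⬝ᵥ Mᵀ *ᵥ y = (M *ᵥ x) ⬝ᵥ y := by
  rw [Matrix.dotProduct_mulVec, Matrix.vecMul_transpose]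

lemma continuous_quadX (P Q : Matrix m m ℝ) :
    Continuous fun X : m → ℝ => (P *ᵥ X) ⬝ᵥ (Q *ᵥ X) := by
  have h : (fun X : m → ℝ => (P *ᵥ X) ⬝ᵥ (Q *ᵥ X))
      = fun X => ∑ i, (∑ j, P i j * X j) * (∑ j, Q i j * X j) := rfl
  rw [h]
  exact continuous_finset_sum _ fun i _ =>
    (continuous_finset_sum _ fun j _ => continuous_const.mul (continuous_apply j)).mul
    (continuous_finset_sum _ fun j _ => continuous_const.mul (continuous_apply j))

/-! ### Analysis with the matrix exponential -/

section ExpStuff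

attribute [local instance] Matrix.linftyOpNormedAddCommGroup Matrix.linftyOpNormedRing
  Matrix.linftyOpNormedAlgebra

/-- `M ↦ (C * M) *ᵥ X` as a continuous linear map. -/
def mulVecCLM (C : Matrix m m ℝ) (X : m → ℝ) : Matrix m m ℝ →L[ℝ] (m → ℝ) :=
  LinearMap.toContinuousLinearMap
    { toFun := fun M => (C * M) *ᵥ X
      map_add' := by intro M N; rw [mul_add, Matrix.add_mulVec]
      map_smul' := by intro c M; rw [mul_smul_comm, Matrix.smul_mulVec]; rfl }

@[simp] lemma mulVecCLM_apply (C : Matrix m m ℝ) (X : m → ℝ) (M : Matrix m m ℝ) :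
    mulVecCLM C X M = (C * M) *ᵥ X := rfl

/-- `M ↦ X ⬝ᵥ M *ᵥ X` as a continuous linear map. -/
def quadCLM (X : m → ℝ) : Matrix m m ℝ →L[ℝ] ℝ :=
  LinearMap.toContinuousLinearMap
    { toFun := fun M => X ⬝ᵥ M *ᵥ X
      map_add' := by intro M N; rw [Matrix.add_mulVec, dotProduct_add]
      map_smul' := by intro c M;
                      rw [Matrix.smul_mulVec, dotProduct_smul]; rfl }

@[simp] lemma quadCLM_apply (X : m → ℝ) (M : Matrix m m ℝ) :
    quadCLM X M = X ⬝ᵥ M *ᵥ X := rfl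

/-- Transpose as a continuous linear map. -/
def transposeCLM : Matrix m m ℝ →L[ℝ] Matrix m m ℝ :=
  LinearMap.toContinuousLinearMap
    { toFun := fun M => Mᵀ
      map_add' := by intro M N; rw [Matrix.transpose_add]
      map_smul' := by intro c M; rw [Matrix.transpose_smul]; rfl }

@[simp] lemma transposeCLM_apply (M : Matrix m m ℝ) :
    (transposeCLM M : Matrix m m ℝ) = Mᵀ := rfl

/-- The one-parameter group `E u = exp (u • Fi)`. -/
def Egrp (Fi : Matrix m m ℝ) (u : ℝ) : Matrix m m ℝ := NormedSpace.exp (u • Fi)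

lemma Egrp_deriv (Fi : Matrix m m ℝ) (u : ℝ) :
    HasDerivAt (Egrp Fi) (Egrp Fi u * Fi) u :=
  hasDerivAt_exp_smul_const Fi u

lemma Egrp_zero (Fi : Matrix m m ℝ) : Egrp Fi 0 = 1 := by
  simp [Egrp, NormedSpace.exp_zero]

lemma Egrp_add (Fi : Matrix m m ℝ) (a b : ℝ) :
    Egrp Fi a * Egrp Fi b = Egrp Fi (a + b) := by
  rw [Egrp, Egrp, Egrp, add_smul]
  exact (NormedSpace.exp_add_of_commute ((Commute.refl Fi).smul_left a |>.smul_right b)).symm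

lemma Egrp_cont (Fi : Matrix m m ℝ) : Continuous (Egrp Fi) :=
  NormedSpace.exp_continuous.comp (continuous_id.smul continuous_const)

lemma Egrp_comm (Fi : Matrix m m ℝ) (u : ℝ) : Egrp Fi u * Fi = Fi * Egrp Fi u := by
  rw [Egrp]
  exact (((Commute.refl Fi).smul_left u).exp_left).eq

lemma Egrp_deriv0 (Fi : Matrix m m ℝ) : HasDerivAt (Egrp Fi) Fi 0 := by
  have := Egrp_deriv Fi 0
  rwa [Egrp_zero, one_mul] at this

lemma continuous_r (Fi Ar : Matrix m m ℝ) (X : m → ℝ) :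
    Continuous fun u => (Egrp Fi u *ᵥ X) ⬝ᵥ Ar *ᵥ (Egrp Fi u *ᵥ X) := by
  have h1 : (fun u => (Egrp Fi u *ᵥ X) ⬝ᵥ Ar *ᵥ (Egrp Fi u *ᵥ X))
      = fun u => quadCLM X ((Egrp Fi u)ᵀ * Ar * Egrp Fi u) := by
    funext u; rw [quadCLM_apply, quad_conj]
  rw [h1]
  exact (quadCLM X).continuous.comp
    (((transposeCLM.continuous.comp (Egrp_cont Fi)).mul continuous_const).mul (Egrp_cont Fi))

/-- The key derivative identity relating `A_G` to the time-averaged quadratic form. -/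
lemma identityA {T : ℝ} (hT : 0 < T) (Fi Ar AG : Matrix m m ℝ) (hAGs : AG.IsSymm)
    (hAG' : ∀ Y : m → ℝ, Y ⬝ᵥ AG *ᵥ Y = ∫ t in (0:ℝ)..T, (1 - t/T) *
        ((Egrp Fi (2*t) *ᵥ Y) ⬝ᵥ Ar *ᵥ (Egrp Fi (2*t) *ᵥ Y)))
    (X : m → ℝ) :
    2 * ((Fi *ᵥ X) ⬝ᵥ AG *ᵥ X)
      = (1/(4*T)) * (∫ u in (0:ℝ)..(2*T), (Egrp Fi u *ᵥ X) ⬝ᵥ Ar *ᵥ (Egrp Fi u *ᵥ X))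
        - (1/2) * (X ⬝ᵥ Ar *ᵥ X) := by
  have hTne : T ≠ 0 := ne_of_gt hT
  set r : ℝ → ℝ := fun u => (Egrp Fi u *ᵥ X) ⬝ᵥ Ar *ᵥ (Egrp Fi u *ᵥ X) with hrdef
  have hrc : Continuous r := continuous_r Fi Ar X
  have hfc : Continuous (fun u : ℝ => u * r u) := continuous_id.mul hrc
  set I1 : ℝ → ℝ := fun x => ∫ u in (0:ℝ)..x, r u with hI1def
  set I2 : ℝ → ℝ := fun x => ∫ u in (0:ℝ)..x, u * r u with hI2def
  have hI1 : ∀ b : ℝ, HasDerivAt I1 (r b) b := fun b =>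
    intervalIntegral.integral_hasDerivAt_right (hrc.intervalIntegrable 0 b)
      hrc.stronglyMeasurable.stronglyMeasurableAtFilter hrc.continuousAt
  have hI2 : ∀ b : ℝ, HasDerivAt I2 (b * r b) b := fun b =>
    intervalIntegral.integral_hasDerivAt_right (hfc.intervalIntegrable 0 b)
      hfc.stronglyMeasurable.stronglyMeasurableAtFilter hfc.continuousAt
  -- closed form for φ
  have hpsi : ∀ s : ℝ, ((Egrp Fi s *ᵥ X) ⬝ᵥ AG *ᵥ (Egrp Fi s *ᵥ X))
      = (1/2) * ((1 + s/(2*T)) * (I1 (2*T+s) - I1 s) - (1/(2*T)) * (I2 (2*T+s) - I2 s)) := by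
    intro s
    have h0 : ∀ t : ℝ, Egrp Fi (2*t) *ᵥ (Egrp Fi s *ᵥ X) = Egrp Fi (2*t+s) *ᵥ X := by
      intro t; rw [Matrix.mulVec_mulVec, Egrp_add]
    rw [hAG' (Egrp Fi s *ᵥ X)]
    have h1 : (∫ t in (0:ℝ)..T, (1 - t/T) *
          ((Egrp Fi (2*t) *ᵥ (Egrp Fi s *ᵥ X)) ⬝ᵥ Ar *ᵥ (Egrp Fi (2*t) *ᵥ (Egrp Fi s *ᵥ X))))
        = ∫ t in (0:ℝ)..T, (fun u => (1 - (u-s)/(2*T)) * r u) (2*t+s) := by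
      refine intervalIntegral.integral_congr fun t _ => ?_
      simp only [h0]
      have h2t : (2*t+s-s)/(2*T) = t/T := by
        rw [add_sub_cancel_right, mul_div_mul_left _ _ (two_ne_zero)]
      rw [h2t]
    have h2 := intervalIntegral.integral_comp_mul_add (a := 0) (b := T)
      (fun u => (1 - (u-s)/(2*T)) * r u) (two_ne_zero (α := ℝ)) s
    rw [h1, h2]
    have d1 : I1 (2*T+s) - I1 s = ∫ u in s..(2*T+s), r u :=
      intervalIntegral.integral_interval_sub_left (hrc.intervalIntegrable 0 _)
        (hrc.intervalIntegrable 0 _)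
    have d2 : I2 (2*T+s) - I2 s = ∫ u in s..(2*T+s), u * r u :=
      intervalIntegral.integral_interval_sub_left (hfc.intervalIntegrable 0 _)
        (hfc.intervalIntegrable 0 _)
    rw [d1, d2]
    have e1 : ∀ u : ℝ, (1 - (u-s)/(2*T)) * r u
        = (1 + s/(2*T)) * r u - (1/(2*T)) * (u * r u) := by
      intro u; field_simp; ring
    rw [show (2*0+s : ℝ) = s by ring]
    rw [intervalIntegral.integral_congr (fun u _ => e1 u)]
    rw [intervalIntegral.integral_sub ((hrc.intervalIntegrable _ _).const_mul _)
      ((hfc.intervalIntegrable _ _).const_mul _)]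
    rw [intervalIntegral.integral_const_mul, intervalIntegral.integral_const_mul]
    rw [smul_eq_mul]
    ring
  -- derivative of the φ side
  have hE0 := Egrp_deriv0 Fi
  have hEt : HasDerivAt (fun s => (Egrp Fi s)ᵀ) Fiᵀ 0 := by
    have h := (transposeCLM (m := m)).hasFDerivAt.comp_hasDerivAt 0 hE0
    exact h
  have h1d : HasDerivAt (fun s => (Egrp Fi s)ᵀ * AG) (Fiᵀ * AG) 0 := hEt.mul_const AG
  have h2d : HasDerivAt (fun s => (Egrp Fi s)ᵀ * AG * Egrp Fi s) (Fiᵀ * AG + AG * Fi) 0 := by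
    have h := h1d.mul hE0
    simp [Egrp_zero] at h; exact h
  have hφ : HasDerivAt (fun s => (Egrp Fi s *ᵥ X) ⬝ᵥ AG *ᵥ (Egrp Fi s *ᵥ X))
      (2 * ((Fi *ᵥ X) ⬝ᵥ AG *ᵥ X)) 0 := by
    have h3 := (quadCLM X).hasFDerivAt.comp_hasDerivAt 0 h2d
    have heq : (fun s => quadCLM X ((Egrp Fi s)ᵀ * AG * Egrp Fi s))
        = fun s => (Egrp Fi s *ᵥ X) ⬝ᵥ AG *ᵥ (Egrp Fi s *ᵥ X) := by
      funext s; rw [quadCLM_apply, quad_conj]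
    simp only [Function.comp_def] at h3
    rw [heq] at h3
    refine h3.congr_deriv ?_
    have e1 : X ⬝ᵥ (Fiᵀ * AG) *ᵥ X = (Fi *ᵥ X) ⬝ᵥ AG *ᵥ X := by
      rw [← Matrix.mulVec_mulVec, dot_transpose_mulVec]
    have e2 : X ⬝ᵥ (AG * Fi) *ᵥ X = (Fi *ᵥ X) ⬝ᵥ AG *ᵥ X := by
      rw [← Matrix.mulVec_mulVec, symm_dot AG hAGs]
    show X ⬝ᵥ (Fiᵀ * AG + AG * Fi) *ᵥ X = _
    rw [Matrix.add_mulVec, dotProduct_add, e1, e2]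
    ring
  -- derivative of the ψ side
  have hc1 : HasDerivAt (fun s : ℝ => 1 + s/(2*T)) (1/(2*T)) 0 := by
    simpa using ((hasDerivAt_id (0:ℝ)).div_const (2*T)).const_add 1
  have hA1 : HasDerivAt (fun s : ℝ => I1 (2*T+s)) (r (2*T)) 0 := by
    have h := (hI1 (2*T+0)).comp (0:ℝ) ((hasDerivAt_id (0:ℝ)).const_add (2*T))
    simp at h; exact h
  have hA2 : HasDerivAt (fun s : ℝ => I2 (2*T+s)) ((2*T) * r (2*T)) 0 := by
    have h := (hI2 (2*T+0)).comp (0:ℝ) ((hasDerivAt_id (0:ℝ)).const_add (2*T))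
    simp at h; exact h
  have hR1 : HasDerivAt (fun s => I1 (2*T+s) - I1 s) (r (2*T) - r 0) 0 := hA1.sub (hI1 0)
  have hR2 : HasDerivAt (fun s => I2 (2*T+s) - I2 s) ((2*T) * r (2*T) - 0 * r 0) 0 :=
    hA2.sub (hI2 0)
  have hψ : HasDerivAt (fun s => (1/2) * ((1 + s/(2*T)) * (I1 (2*T+s) - I1 s)
        - (1/(2*T)) * (I2 (2*T+s) - I2 s)))
      ((1/2) * (((1/(2*T)) * (I1 (2*T+0) - I1 0) + (1 + 0/(2*T)) * (r (2*T) - r 0))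
        - (1/(2*T)) * ((2*T) * r (2*T) - 0 * r 0))) 0 :=
    ((hc1.mul hR1).sub (hR2.const_mul (1/(2*T)))).const_mul (1/2)
  have hfun : (fun s => (Egrp Fi s *ᵥ X) ⬝ᵥ AG *ᵥ (Egrp Fi s *ᵥ X))
      = fun s => (1/2) * ((1 + s/(2*T)) * (I1 (2*T+s) - I1 s)
          - (1/(2*T)) * (I2 (2*T+s) - I2 s)) := funext hpsi
  rw [hfun] at hφ
  have huniq := hφ.unique hψ
  have hI10 : I1 0 = 0 := intervalIntegral.integral_same
  have hr0 : r 0 = X ⬝ᵥ Ar *ᵥ X := by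
    rw [hrdef]; simp [Egrp_zero, Matrix.one_mulVec]
  rw [huniq, hI10, hr0]
  rw [show (2*T+0 : ℝ) = 2*T by ring]
  have : I1 (2*T) = ∫ u in (0:ℝ)..(2*T), r u := rfl
  rw [this]
  field_simp
  ring

/-- Positivity of the time-averaged quadratic form when the singular space is trivial. -/
lemma lemB {T : ℝ} (hT : 0 < T) (Fi Ar Fr : Matrix m m ℝ) (hArs : Ar.IsSymm)
    (hpos' : ∀ Y : m → ℝ, 0 ≤ Y ⬝ᵥ Ar *ᵥ Y)
    (hFrAr : ∀ v : m → ℝ, Ar *ᵥ v = 0 → Fr *ᵥ v = 0)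
    (K : ℕ)
    (hker : ∀ Y : m → ℝ, (∀ k : ℕ, k ≤ K → (Fr * Fi ^ k) *ᵥ Y = 0) → Y = 0)
    (X : m → ℝ) (hX : X ≠ 0) :
    0 < ∫ u in (0:ℝ)..(2*T), (Egrp Fi u *ᵥ X) ⬝ᵥ Ar *ᵥ (Egrp Fi u *ᵥ X) := by
  set r : ℝ → ℝ := fun u => (Egrp Fi u *ᵥ X) ⬝ᵥ Ar *ᵥ (Egrp Fi u *ᵥ X) with hrdef
  have hrc : Continuous r := continuous_r Fi Ar X
  refine intervalIntegral.integral_pos (by linarith) hrc.continuousOn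
    (fun x _ => hpos' _) ?_
  by_contra hcon
  push_neg at hcon
  have hzero : ∀ u ∈ Set.Icc (0:ℝ) (2*T), r u = 0 := fun u hu =>
    le_antisymm (hcon u hu) (hpos' _)
  have hAr_psd : Ar.PosSemidef := by
    refine Matrix.PosSemidef.of_dotProduct_mulVec_nonneg ?_ ?_
    · show Arᴴ = Ar
      have : Arᴴ = Arᵀ := by ext i j; simp [Matrix.conjTranspose_apply]
      rw [this, hArs.eq]
    · intro x
      simpa using hpos' x
  have hkerAr : ∀ u ∈ Set.Icc (0:ℝ) (2*T), Ar *ᵥ (Egrp Fi u *ᵥ X) = 0 := by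
    intro u hu
    have h := hzero u hu
    rw [hrdef] at h
    have := (hAr_psd.dotProduct_mulVec_zero_iff (Egrp Fi u *ᵥ X)).mp (by simpa using h)
    exact this
  have main : ∀ k : ℕ, ∀ u ∈ Set.Ioo (0:ℝ) (2*T), ((Fr * Fi ^ k) * Egrp Fi u) *ᵥ X = 0 := by
    intro k
    induction k with
    | zero =>
      intro u hu
      have h1 : Fr *ᵥ (Egrp Fi u *ᵥ X) = 0 :=
        hFrAr _ (hkerAr u (Set.mem_Icc_of_Ioo hu))
      rw [pow_zero, mul_one, ← Matrix.mulVec_mulVec]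
      exact h1
    | succ k ih =>
      intro u hu
      have hg : HasDerivAt (fun s => mulVecCLM (Fr * Fi ^ k) X (Egrp Fi s))
          (mulVecCLM (Fr * Fi ^ k) X (Egrp Fi u * Fi)) u :=
        (mulVecCLM (Fr * Fi ^ k) X).hasFDerivAt.comp_hasDerivAt u (Egrp_deriv Fi u)
      have hzero' : HasDerivAt (fun s => mulVecCLM (Fr * Fi ^ k) X (Egrp Fi s))
          (0 : m → ℝ) u := by
        have hev : (fun s => mulVecCLM (Fr * Fi ^ k) X (Egrp Fi s))
            =ᶠ[nhds u] (fun _ => (0 : m → ℝ)) := by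
          filter_upwards [Ioo_mem_nhds hu.1 hu.2] with s hs
          simpa using ih s hs
        exact (hasDerivAt_const u (0 : m → ℝ)).congr_of_eventuallyEq hev
      have huniq := hg.unique hzero'
      rw [mulVecCLM_apply] at huniq
      have : (Fr * Fi ^ k) * (Egrp Fi u * Fi) = (Fr * Fi ^ (k+1)) * Egrp Fi u := by
        rw [Egrp_comm, pow_succ]
        noncomm_ring
      rw [this] at huniq
      exact huniq
  have hT2 : T ∈ Set.Ioo (0:ℝ) (2*T) := ⟨hT, by linarith⟩
  have hY : Egrp Fi T *ᵥ X = 0 := by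
    apply hker
    intro k hk
    rw [Matrix.mulVec_mulVec]
    exact main k T hT2
  have hX0 : X = 0 := by
    have h := congrArg (fun v => Egrp Fi (-T) *ᵥ v) hY
    simpa [Matrix.mulVec_mulVec, Egrp_add, Egrp_zero, Matrix.one_mulVec] using h
  exact hX hX0

end ExpStuff

end S4

open S4 in
theorem statement4 (d : ℕ) (hd : 0 < d)
    (A F : Matrix (Fin d ⊕ Fin d) (Fin d ⊕ Fin d) ℂ)
    (hA : A.IsSymm)
    (hF : F = -(Jmat d ℂ) * A)
    (hpos : ∀ X : Fin d ⊕ Fin d → ℝ, 0 ≤ (Qc A X).re)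
    (hS : ∀ X : Fin d ⊕ Fin d → ℝ,
      (∀ k : ℕ, k ≤ 2 * d - 1 →
        (F.map Complex.re * (F.map Complex.im) ^ k) *ᵥ X = 0) → X = 0)
    (T : ℝ) (hT : 0 < T)
    (AG : Matrix (Fin d ⊕ Fin d) (Fin d ⊕ Fin d) ℝ) (hAGsymm : AG.IsSymm)
    (hAG : ∀ X : Fin d ⊕ Fin d → ℝ,
      X ⬝ᵥ AG *ᵥ X =
        ∫ t in (0:ℝ)..T, (1 - t / T) *
          (Qc A (NormedSpace.exp ((2 * t) • F.map Complex.im) *ᵥ X)).re) :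
    ∃ δ₀ : ℝ, 0 < δ₀ ∧ ∀ δ : ℝ, 0 < δ → δ ≤ δ₀ →
      ∀ X : Fin d ⊕ Fin d → ℝ, X ≠ 0 →
        0 < ((fun i => (X i : ℂ) +
                Complex.I * (δ : ℂ) * ((((-2 : ℝ) • (Jmat d ℝ * AG)) *ᵥ X) i : ℂ)) ⬝ᵥ
              A *ᵥ
              (fun i => (X i : ℂ) +
                Complex.I * (δ : ℂ) * ((((-2 : ℝ) • (Jmat d ℝ * AG)) *ᵥ X) i : ℂ))).re := by
  classical
  have hArs : (A.map Complex.re).IsSymm := hA.map _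
  have hAis : (A.map Complex.im).IsSymm := hA.map _
  have hQcre : ∀ Y : Fin d ⊕ Fin d → ℝ, (Qc A Y).re = Y ⬝ᵥ A.map Complex.re *ᵥ Y := by
    intro Y; rw [Qc, S4.cdot_eq]; simp
  have hFc : F = ((-(Jmat d ℝ)).map (fun r => (r:ℂ))) * A := by
    rw [hF, S4.Jc_eq]
    congr 1
    ext i j
    simp [Matrix.map_apply]
  have hFr : F.map Complex.re = (-(Jmat d ℝ)) * A.map Complex.re := by
    rw [hFc, S4.map_ofReal_mul_re]
  have hFi : F.map Complex.im = (-(Jmat d ℝ)) * A.map Complex.im := by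
    rw [hFc, S4.map_ofReal_mul_im]
  have hFit : (F.map Complex.im)ᵀ = A.map Complex.im * Jmat d ℝ := by
    rw [hFi, Matrix.transpose_mul, Matrix.transpose_neg, S4.Jt, neg_neg, hAis.eq]
  -- the cross term
  have hcross : ∀ x : Fin d ⊕ Fin d → ℝ,
      x ⬝ᵥ (A.map Complex.im) *ᵥ (((-2:ℝ) • (Jmat d ℝ * AG)) *ᵥ x)
        = -2 * ((F.map Complex.im *ᵥ x) ⬝ᵥ AG *ᵥ x) := by
    intro x
    rw [Matrix.smul_mulVec, Matrix.mulVec_smul, dotProduct_smul]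
    rw [Matrix.mulVec_mulVec, ← Matrix.mul_assoc, ← hFit, ← Matrix.mulVec_mulVec,
      S4.dot_transpose_mulVec]
    simp [smul_eq_mul]
  -- hAG in the Egrp language
  have hAG' : ∀ Y : Fin d ⊕ Fin d → ℝ,
      Y ⬝ᵥ AG *ᵥ Y = ∫ t in (0:ℝ)..T, (1 - t/T) *
        ((S4.Egrp (F.map Complex.im) (2*t) *ᵥ Y) ⬝ᵥ (A.map Complex.re) *ᵥ
          (S4.Egrp (F.map Complex.im) (2*t) *ᵥ Y)) := by
    intro Y
    rw [hAG Y]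
    refine intervalIntegral.integral_congr fun t _ => ?_
    rw [hQcre]
    rfl
  -- key identity
  set L : (Fin d ⊕ Fin d → ℝ) → ℝ := fun X => ∫ u in (0:ℝ)..(2*T),
    (S4.Egrp (F.map Complex.im) u *ᵥ X) ⬝ᵥ (A.map Complex.re) *ᵥ
      (S4.Egrp (F.map Complex.im) u *ᵥ X) with hLdef
  have hkey : ∀ X : Fin d ⊕ Fin d → ℝ,
      2 * ((F.map Complex.im *ᵥ X) ⬝ᵥ AG *ᵥ X)
        = (1/(4*T)) * L X - (1/2) * (X ⬝ᵥ (A.map Complex.re) *ᵥ X) :=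
    fun X => S4.identityA hT (F.map Complex.im) (A.map Complex.re) AG hAGsymm hAG' X
  have hpos' : ∀ Y : Fin d ⊕ Fin d → ℝ, 0 ≤ Y ⬝ᵥ (A.map Complex.re) *ᵥ Y := fun Y => by
    rw [← hQcre]; exact hpos Y
  have hFrAr : ∀ v : Fin d ⊕ Fin d → ℝ,
      (A.map Complex.re) *ᵥ v = 0 → (F.map Complex.re) *ᵥ v = 0 := by
    intro v hv
    rw [hFr, ← Matrix.mulVec_mulVec, hv, Matrix.mulVec_zero]
  have hLpos : ∀ X : Fin d ⊕ Fin d → ℝ, X ≠ 0 → 0 < L X := fun X hX =>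
    S4.lemB hT (F.map Complex.im) (A.map Complex.re) (F.map Complex.re) hArs hpos'
      hFrAr (2*d-1) hS X hX
  -- closed form of L
  have hL : ∀ X : Fin d ⊕ Fin d → ℝ,
      L X = 8*T*((F.map Complex.im *ᵥ X) ⬝ᵥ AG *ᵥ X)
        + 2*T*(X ⬝ᵥ (A.map Complex.re) *ᵥ X) := by
    intro X
    have h := hkey X
    have hTne : T ≠ 0 := ne_of_gt hT
    field_simp at h
    linarith
  have hLcont : Continuous L := by
    have hform : L = fun X => 8*T*((F.map Complex.im *ᵥ X) ⬝ᵥ (AG *ᵥ X))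
        + 2*T*(X ⬝ᵥ ((A.map Complex.re) *ᵥ X)) := funext hL
    rw [hform]
    refine Continuous.add ?_ ?_
    · exact continuous_const.mul (S4.continuous_quadX (F.map Complex.im) AG)
    · have h1 := S4.continuous_quadX (1 : Matrix (Fin d ⊕ Fin d) (Fin d ⊕ Fin d) ℝ)
        (A.map Complex.re)
      simp only [Matrix.one_mulVec] at h1
      exact continuous_const.mul h1
  -- the δ² term
  set Pq : (Fin d ⊕ Fin d → ℝ) → ℝ := fun X =>
    (((-2:ℝ) • (Jmat d ℝ * AG)) *ᵥ X) ⬝ᵥ (A.map Complex.re) *ᵥ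
      (((-2:ℝ) • (Jmat d ℝ * AG)) *ᵥ X) with hPqdef
  have hPqcont : Continuous Pq := by
    have hform : Pq = fun X => (((-2:ℝ) • (Jmat d ℝ * AG)) *ᵥ X) ⬝ᵥ
        (((A.map Complex.re) * ((-2:ℝ) • (Jmat d ℝ * AG))) *ᵥ X) := by
      funext X; rw [hPqdef, ← Matrix.mulVec_mulVec]
    rw [hform]
    exact S4.continuous_quadX _ _
  -- compactness on the sphere
  haveI hne : Nonempty (Fin d ⊕ Fin d) := ⟨Sum.inl ⟨0, hd⟩⟩
  have hx0 : (fun _ => (1:ℝ)) ∈ Metric.sphere (0 : Fin d ⊕ Fin d → ℝ) 1 := by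
    simp [Metric.mem_sphere, dist_zero_right]
  obtain ⟨u1, hu1S, hu1min⟩ := (isCompact_sphere (0 : Fin d ⊕ Fin d → ℝ) 1).exists_isMinOn
    ⟨_, hx0⟩ hLcont.continuousOn
  obtain ⟨u2, hu2S, hu2max⟩ := (isCompact_sphere (0 : Fin d ⊕ Fin d → ℝ) 1).exists_isMaxOn
    ⟨_, hx0⟩ hPqcont.continuousOn
  have hu1norm : ‖u1‖ = 1 := by simpa [mem_sphere_iff_norm] using hu1S
  have hu1ne : u1 ≠ 0 := by
    intro h; rw [h] at hu1norm; simp at hu1norm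
  have hc : 0 < L u1 := hLpos u1 hu1ne
  set C' : ℝ := max (Pq u2) 1 with hC'def
  have hC'pos : (0:ℝ) < C' := lt_of_lt_of_le one_pos (le_max_right _ _)
  refine ⟨min 1 ((L u1/(2*T))/(2*C')), lt_min one_pos (by positivity), ?_⟩
  intro δ hδ hδ₀ X hX
  -- expand the quadratic form
  rw [S4.re_expand A hA δ X (((-2:ℝ) • (Jmat d ℝ * AG)) *ᵥ X), hcross X]
  -- scaling
  have ha : 0 < ‖X‖ := norm_pos_iff.mpr hX
  set a : ℝ := ‖X‖ with hadef
  set u : Fin d ⊕ Fin d → ℝ := a⁻¹ • X with hudef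
  have hau : X = a • u := by
    rw [hudef, smul_smul, mul_inv_cancel₀ (ne_of_gt ha), one_smul]
  have huS : u ∈ Metric.sphere (0 : Fin d ⊕ Fin d → ℝ) 1 := by
    simp only [mem_sphere_iff_norm, sub_zero, hudef, norm_smul, norm_inv, norm_norm]
    rw [← hadef]
    field_simp
    rw [Real.norm_of_nonneg ha.le]; exact div_self (ne_of_gt ha)
  have hLX : L X = a^2 * L u := by
    rw [hau, hL (a • u), hL u]
    simp only [Matrix.mulVec_smul, smul_dotProduct, dotProduct_smul, smul_eq_mul]
    ring
  have hPX : Pq X = a^2 * Pq u := by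
    rw [hau, hPqdef]
    simp only [Matrix.mulVec_smul, smul_dotProduct, dotProduct_smul, smul_eq_mul]
    ring
  have hLlow : a^2 * L u1 ≤ L X := by
    rw [hLX]
    exact mul_le_mul_of_nonneg_left (isMinOn_iff.mp hu1min u huS) (sq_nonneg a)
  have hPup : Pq X ≤ a^2 * C' := by
    rw [hPX]
    exact mul_le_mul_of_nonneg_left (le_trans (isMaxOn_iff.mp hu2max u huS) (le_max_left _ _)) (sq_nonneg a)
  have hq0 : 0 ≤ X ⬝ᵥ (A.map Complex.re) *ᵥ X := hpos' X
  have hδ1 : δ ≤ 1 := le_trans hδ₀ (min_le_left _ _)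
  have hδd : δ ≤ (L u1/(2*T))/(2*C') := le_trans hδ₀ (min_le_right _ _)
  have hδC : δ * C' ≤ L u1/(4*T) := by
    have h1 : δ * C' ≤ ((L u1/(2*T))/(2*C')) * C' :=
      mul_le_mul_of_nonneg_right hδd (le_of_lt hC'pos)
    have h2 : ((L u1/(2*T))/(2*C')) * C' = L u1/(4*T) := by
      field_simp
      ring
    linarith
  -- final computation
  have h8 : L X = 8*T*((F.map Complex.im *ᵥ X) ⬝ᵥ AG *ᵥ X)
      + 2*T*(X ⬝ᵥ (A.map Complex.re) *ᵥ X) := hL X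
  have hTne : T ≠ 0 := ne_of_gt hT
  have e1 : X ⬝ᵥ (A.map Complex.re) *ᵥ X
        - 2*δ*(-2*((F.map Complex.im *ᵥ X) ⬝ᵥ AG *ᵥ X)) - δ^2 * Pq X
      = (1-δ) * (X ⬝ᵥ (A.map Complex.re) *ᵥ X) + (δ/(2*T)) * L X - δ^2 * Pq X := by
    rw [h8]; field_simp; ring
  rw [show X ⬝ᵥ (A.map Complex.re) *ᵥ X
        - 2*δ*(-2*((F.map Complex.im *ᵥ X) ⬝ᵥ AG *ᵥ X))
        - δ^2 * ((((-2:ℝ) • (Jmat d ℝ * AG)) *ᵥ X) ⬝ᵥ (A.map Complex.re) *ᵥ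
            (((-2:ℝ) • (Jmat d ℝ * AG)) *ᵥ X))
      = (1-δ) * (X ⬝ᵥ (A.map Complex.re) *ᵥ X) + (δ/(2*T)) * L X - δ^2 * Pq X from e1]
  have p1 : 0 ≤ (1-δ) * (X ⬝ᵥ (A.map Complex.re) *ᵥ X) :=
    mul_nonneg (by linarith) hq0
  have p2 : (δ/(2*T)) * (a^2 * L u1) ≤ (δ/(2*T)) * L X :=
    mul_le_mul_of_nonneg_left hLlow (by positivity)
  have p3 : δ^2 * Pq X ≤ δ^2 * (a^2 * C') :=
    mul_le_mul_of_nonneg_left hPup (sq_nonneg δ)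
  have p4 : δ^2 * (a^2 * C') = (a^2*δ) * (δ * C') := by ring
  have p5 : (δ/(2*T)) * (a^2 * L u1) = (a^2*δ) * (L u1/(2*T)) := by ring
  have p6 : (a^2*δ) * (δ * C') ≤ (a^2*δ) * (L u1/(4*T)) :=
    mul_le_mul_of_nonneg_left hδC (by positivity)
  have q1 : (a^2*δ) * (L u1/(2*T)) = 2 * ((a^2*δ) * (L u1/(4*T))) := by
    field_simp; ring
  have p8 : 0 < (a^2*δ) * (L u1/(4*T)) :=
    mul_pos (by positivity) (div_pos hc (by linarith))
  linarith [p1, p2, p3, p4, p5, p6, q1, p8]
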